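/- Let B = [[0,1],[-1,0]] and define P¹_m(x,t) = diag(p_{2m-1}(x,t), -p_{2m}(x,t)), where p_{2m-1}, p_{2m} are the wave polynomials. Then P¹_m satisfies B·∂ₓP¹_m + ∂ₜP¹_m·B = 0. -/

import Mathlib

open Matrix

noncomputable section

attribute [local instance] Matrix.frobeniusNormedAddCommGroup Matrix.frobeniusNormedSpace

/-- The matrix B = [[0,1],[-1,0]]. -/
def Bmat : Matrix (Fin 2) (Fin 2) ℝ := !![0, 1; -1, 0]

/-- The odd-indexed wave polynomial p_{2m-1}(x,t) = Σ_{even k ≤ m} C(m,k) x^{m-k} t^k. -/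
def pOdd (m : ℕ) (x t : ℝ) : ℝ :=
  ∑ k ∈ Finset.range (m + 1), if Even k then (m.choose k : ℝ) * x ^ (m - k) * t ^ k else 0

/-- The even-indexed wave polynomial p_{2m}(x,t) = Σ_{odd k ≤ m} C(m,k) x^{m-k} t^k. -/
def pEven (m : ℕ) (x t : ℝ) : ℝ :=
  ∑ k ∈ Finset.range (m + 1), if Odd k then (m.choose k : ℝ) * x ^ (m - k) * t ^ k else 0

/-- The wave matrix P¹_m(x,t) = diag(p_{2m-1}(x,t), -p_{2m}(x,t)). -/
def P1 (m : ℕ) (x t : ℝ) : Matrix (Fin 2) (Fin 2) ℝ :=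
  !![pOdd m x t, 0; 0, -pEven m x t]

/- auxiliary derivative sums -/
def DOx (m : ℕ) (x t : ℝ) : ℝ :=
  ∑ k ∈ Finset.range (m + 1),
    if Even k then (m.choose k : ℝ) * (((m - k : ℕ) : ℝ) * x ^ (m - k - 1)) * t ^ k else 0

def DOt (m : ℕ) (x t : ℝ) : ℝ :=
  ∑ k ∈ Finset.range (m + 1),
    if Even k then (m.choose k : ℝ) * x ^ (m - k) * ((k : ℝ) * t ^ (k - 1)) else 0

def DEx (m : ℕ) (x t : ℝ) : ℝ :=
  ∑ k ∈ Finset.range (m + 1),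
    if Odd k then (m.choose k : ℝ) * (((m - k : ℕ) : ℝ) * x ^ (m - k - 1)) * t ^ k else 0

def DEt (m : ℕ) (x t : ℝ) : ℝ :=
  ∑ k ∈ Finset.range (m + 1),
    if Odd k then (m.choose k : ℝ) * x ^ (m - k) * ((k : ℝ) * t ^ (k - 1)) else 0

lemma key (m j : ℕ) :
    ((m.choose (j + 1) : ℝ)) * (j + 1) = (m.choose j : ℝ) * ((m - j : ℕ) : ℝ) := by
  exact_mod_cast congrArg (Nat.cast (R := ℝ)) (Nat.choose_succ_right_eq m j)

lemma hasDerivAt_pOdd_x (m : ℕ) (t x : ℝ) :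
    HasDerivAt (fun x => pOdd m x t) (DOx m x t) x := by
  unfold pOdd DOx
  apply HasDerivAt.fun_sum
  intro k _
  by_cases hk : Even k <;> simp only [hk, if_true, if_false]
  · exact (((hasDerivAt_pow (m - k) x).const_mul _).mul_const _)
  · exact hasDerivAt_const _ _

lemma hasDerivAt_pOdd_t (m : ℕ) (x t : ℝ) :
    HasDerivAt (fun t => pOdd m x t) (DOt m x t) t := by
  unfold pOdd DOt
  apply HasDerivAt.fun_sum
  intro k _
  by_cases hk : Even k <;> simp only [hk, if_true, if_false]
  · exact ((hasDerivAt_pow k t).const_mul _)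
  · exact hasDerivAt_const _ _

lemma hasDerivAt_pEven_x (m : ℕ) (t x : ℝ) :
    HasDerivAt (fun x => pEven m x t) (DEx m x t) x := by
  unfold pEven DEx
  apply HasDerivAt.fun_sum
  intro k _
  by_cases hk : Odd k <;> simp only [hk, if_true, if_false]
  · exact (((hasDerivAt_pow (m - k) x).const_mul _).mul_const _)
  · exact hasDerivAt_const _ _

lemma hasDerivAt_pEven_t (m : ℕ) (x t : ℝ) :
    HasDerivAt (fun t => pEven m x t) (DEt m x t) t := by
  unfold pEven DEt
  apply HasDerivAt.fun_sum
  intro k _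
  by_cases hk : Odd k <;> simp only [hk, if_true, if_false]
  · exact ((hasDerivAt_pow k t).const_mul _)
  · exact hasDerivAt_const _ _

lemma DOx_eq_DEt (m : ℕ) (x t : ℝ) : DOx m x t = DEt m x t := by
  unfold DOx DEt
  rw [Finset.sum_range_succ, Finset.sum_range_succ']
  have hlast : (if Even m then (m.choose m : ℝ) * (((m - m : ℕ) : ℝ) * x ^ (m - m - 1)) * t ^ m else 0) = 0 := by
    split <;> simp
  have h0 : (if Odd 0 then (m.choose 0 : ℝ) * x ^ (m - 0) * (((0 : ℕ) : ℝ) * t ^ (0 - 1)) else 0) = 0 := by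
    simp
  rw [hlast, h0, add_zero, add_zero]
  apply Finset.sum_congr rfl
  intro j _
  simp only [Nat.odd_add_one, Nat.not_odd_iff_even, Nat.add_sub_cancel]
  by_cases hjE : Even j
  · simp only [hjE, if_true]
    rw [show m - (j + 1) = m - j - 1 by omega]
    push_cast
    linear_combination (-(x ^ (m - j - 1) * t ^ j)) * key m j
  · simp [hjE]

lemma DOt_eq_DEx (m : ℕ) (x t : ℝ) : DOt m x t = DEx m x t := by
  unfold DOt DEx
  rw [Finset.sum_range_succ', Finset.sum_range_succ]
  have h0 : (if Even 0 then (m.choose 0 : ℝ) * x ^ (m - 0) * (((0 : ℕ) : ℝ) * t ^ (0 - 1)) else 0) = 0 := by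
    simp
  have hlast : (if Odd m then (m.choose m : ℝ) * (((m - m : ℕ) : ℝ) * x ^ (m - m - 1)) * t ^ m else 0) = 0 := by
    split <;> simp
  rw [h0, hlast, add_zero, add_zero]
  apply Finset.sum_congr rfl
  intro j _
  simp only [Nat.even_add_one, Nat.not_even_iff_odd, Nat.add_sub_cancel]
  by_cases hjO : Odd j
  · simp only [hjO, if_true]
    rw [show m - (j + 1) = m - j - 1 by omega]
    push_cast
    linear_combination (x ^ (m - j - 1) * t ^ j) * key m j
  · simp [hjO]

def Amat : Matrix (Fin 2) (Fin 2) ℝ := !![1, 0; 0, 0]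
def Cmat : Matrix (Fin 2) (Fin 2) ℝ := !![0, 0; 0, -1]

lemma P1_eq (m : ℕ) (x t : ℝ) : P1 m x t = pOdd m x t • Amat + pEven m x t • Cmat := by
  unfold P1 Amat Cmat
  ext i j
  fin_cases i <;> fin_cases j <;> simp

lemma deriv_P1_x (m : ℕ) (x t : ℝ) :
    deriv (fun s => P1 m s t) x = DOx m x t • Amat + DEx m x t • Cmat := by
  have h : HasDerivAt (fun s => P1 m s t) (DOx m x t • Amat + DEx m x t • Cmat) x := by
    have h1 := (hasDerivAt_pOdd_x m t x).smul_const Amat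
    have h2 := (hasDerivAt_pEven_x m t x).smul_const Cmat
    have := h1.add h2
    simp only [← P1_eq, Pi.add_def] at this
    exact this
  exact h.deriv

lemma deriv_P1_t (m : ℕ) (x t : ℝ) :
    deriv (fun s => P1 m x s) t = DOt m x t • Amat + DEt m x t • Cmat := by
  have h : HasDerivAt (fun s => P1 m x s) (DOt m x t • Amat + DEt m x t • Cmat) t := by
    have h1 := (hasDerivAt_pOdd_t m x t).smul_const Amat
    have h2 := (hasDerivAt_pEven_t m x t).smul_const Cmat
    have := h1.add h2
    simp only [← P1_eq, Pi.add_def] at this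
    exact this
  exact h.deriv

theorem stmt_7 (m : ℕ) (hm : 1 ≤ m) (x t : ℝ) :
    Bmat * deriv (fun s => P1 m s t) x + deriv (fun s => P1 m x s) t * Bmat = 0 := by
  rw [deriv_P1_x, deriv_P1_t, DOt_eq_DEx, DOx_eq_DEt]
  ext i j
  fin_cases i <;> fin_cases j <;>
    simp [Bmat, Amat, Cmat, Matrix.mul_apply, Fin.sum_univ_two] <;> ring

end
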